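/- A nondegenerate metric continuum C is a Cook continuum if and only if no two different nondegenerate subcontinua of C are comparable by continuous maps; that is, if and only if whenever K and L are nondegenerate subcontinua of C and there exists a continuous surjection from K onto L, then K = L. -/

import Mathlib

open scoped ENNReal

/-- The defining property of a Cook continuum: every continuous map from a subcontinuum
`K` of `C` into `C` is either constant or the identity on `K`. -/
def CookProperty (C : Type*) [TopologicalSpace C] : Prop :=
  ∀ K : Set C, IsCompact K → IsConnected K →
    ∀ f : K → C, Continuous f → (∃ c, ∀ x, f x = c) ∨ ∀ x : K, f x = (x : C)

/-- Boundary bumping (weak form): in a compact Hausdorff connected space, the connected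
component of a point in a proper closed subset meets the frontier of that subset. -/
lemma bump {X : Type*} [TopologicalSpace X] [CompactSpace X] [T2Space X]
    [PreconnectedSpace X] {A : Set X} (hA : IsClosed A) (hAne : A ≠ Set.univ)
    {q : X} (hq : q ∈ A) : (connectedComponentIn A q ∩ frontier A).Nonempty := by
  by_contra hemp
  rw [Set.not_nonempty_iff_eq_empty] at hemp
  haveI : CompactSpace A := isCompact_iff_compactSpace.mp hA.isCompact
  set q' : A := ⟨q, hq⟩
  have himg : connectedComponentIn A q = Subtype.val '' connectedComponent q' :=
    connectedComponentIn_eq_image hq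
  set S : Set A := Subtype.val ⁻¹' (frontier A) with hS
  have hScl : IsClosed S := isClosed_frontier.preimage continuous_subtype_val
  have hScpt : IsCompact S := hScl.isCompact
  have hdisj : S ∩ ⋂ Z : { Z : Set A // IsClopen Z ∧ q' ∈ Z }, (Z : Set A) = ∅ := by
    rw [← connectedComponent_eq_iInter_isClopen q']
    ext x
    simp only [Set.mem_inter_iff, Set.mem_empty_iff_false, iff_false, not_and]
    intro hxS hxc
    have : (x : X) ∈ connectedComponentIn A q ∩ frontier A :=
      ⟨himg ▸ Set.mem_image_of_mem _ hxc, hxS⟩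
    rw [hemp] at this
    exact this
  haveI : Nonempty { Z : Set A // IsClopen Z ∧ q' ∈ Z } :=
    ⟨⟨Set.univ, isClopen_univ, Set.mem_univ _⟩⟩
  obtain ⟨⟨Z, hZclopen, hq'Z⟩, hZS⟩ :=
    hScpt.elim_directed_family_closed _ (fun Z => Z.2.1.1) hdisj
      (fun Z₁ Z₂ => ⟨⟨Z₁ ∩ Z₂, Z₁.2.1.inter Z₂.2.1, ⟨Z₁.2.2, Z₂.2.2⟩⟩,
        Set.inter_subset_left, Set.inter_subset_right⟩)
  -- `Z₀` is the image of `Z` in `X`; it is clopen, nonempty, hence all of `X`.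
  set Z₀ : Set X := Subtype.val '' Z with hZ₀
  have hZ₀A : Z₀ ⊆ A := by rintro _ ⟨x, _, rfl⟩; exact x.2
  have hZ₀closed : IsClosed Z₀ :=
    (hZclopen.1.isCompact.image continuous_subtype_val).isClosed
  have hZ₀fr : Z₀ ∩ frontier A = ∅ := by
    ext x
    simp only [Set.mem_inter_iff, Set.mem_empty_iff_false, iff_false, not_and]
    rintro ⟨y, hyZ, rfl⟩ hfr
    have : y ∈ S ∩ Z := ⟨hfr, hyZ⟩
    rw [hZS] at this
    exact this
  have hZ₀int : Z₀ ⊆ interior A := by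
    intro x hx
    have hxA : x ∈ A := hZ₀A hx
    have hxf : x ∉ frontier A := fun hfr => by
      have h2 : x ∈ Z₀ ∩ frontier A := ⟨hx, hfr⟩
      rw [hZ₀fr] at h2; exact h2
    by_contra hxi
    exact hxf (hA.frontier_eq ▸ ⟨hxA, hxi⟩)
  have hZ₀open : IsOpen Z₀ := by
    obtain ⟨U, hU, hUZ⟩ := isOpen_induced_iff.mp hZclopen.2
    have himg2 : Z₀ = U ∩ A := by
      rw [hZ₀, ← hUZ, Set.image_preimage_eq_inter_range, Subtype.range_coe]
    have : Z₀ = U ∩ interior A := by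
      apply Set.Subset.antisymm
      · intro x hx
        exact ⟨(himg2 ▸ hx).1, hZ₀int hx⟩
      · intro x hx
        rw [himg2]; exact ⟨hx.1, interior_subset hx.2⟩
    rw [this]
    exact hU.inter isOpen_interior
  have : Z₀ = Set.univ :=
    IsClopen.eq_univ ⟨hZ₀closed, hZ₀open⟩ ⟨q, Set.mem_image_of_mem _ hq'Z⟩
  exact hAne (Set.eq_univ_of_univ_subset (this ▸ hZ₀A))

/-- A nondegenerate metric continuum is a Cook continuum iff no two different
nondegenerate subcontinua of it are comparable by continuous maps. -/
theorem statement8 (C : Type*) [MetricSpace C] [CompactSpace C] [ConnectedSpace C]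
    [Nontrivial C] :
    CookProperty C ↔
      ∀ K L : Set C, IsCompact K → IsConnected K → K.Nontrivial →
        IsCompact L → IsConnected L → L.Nontrivial →
        ∀ f : K → C, Continuous f → Set.range f = L → K = L := by
  constructor
  · -- Cook property implies incomparability
    intro hCook K L hK hKc _ _ _ hLnt f hf hrange
    rcases hCook K hK hKc f hf with ⟨c, hc⟩ | hid
    · obtain ⟨a, ha, b, hb, hab⟩ := hLnt
      rw [← hrange] at ha hb
      obtain ⟨x, rfl⟩ := ha
      obtain ⟨y, rfl⟩ := hb
      exact absurd (by rw [hc x, hc y]) hab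
    · rw [← hrange]
      have hfe : f = fun x : K => (x : C) := funext hid
      rw [hfe, Subtype.range_coe]
  · -- incomparability implies the Cook property
    intro h K hK hKc f hf
    by_cases hconst : ∃ c, ∀ x, f x = c
    · exact Or.inl hconst
    right
    push_neg at hconst
    haveI : CompactSpace K := isCompact_iff_compactSpace.mp hK
    haveI : ConnectedSpace K := Subtype.connectedSpace hKc
    obtain ⟨a0, ha0⟩ := hKc.nonempty
    obtain ⟨b, hb⟩ := hconst (f ⟨a0, ha0⟩)
    have hKnt : K.Nontrivial := by
      refine ⟨b, b.2, a0, ha0, fun hh => hb ?_⟩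
      congr 1
      exact Subtype.ext hh
    -- the range of `f` is all of `K`
    have hrnt : (Set.range f).Nontrivial :=
      ⟨f b, Set.mem_range_self b, f ⟨a0, ha0⟩, Set.mem_range_self _, hb⟩
    have hrK : Set.range f = K :=
      (h K (Set.range f) hK hKc hKnt (isCompact_range hf) (isConnected_range hf)
        hrnt f hf rfl).symm
    -- key claim: every value of `f` is a fixed point of `f`
    have key : ∀ q : K, ∀ hcK : f q ∈ K, f ⟨f q, hcK⟩ = f q := by
      intro q hcK
      set c : C := f q with hc
      by_cases hqc : (q : C) = c
      · have : (⟨c, hcK⟩ : K) = q := Subtype.ext hqc.symm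
        rw [this, ← hc]
      -- `c = f q ≠ q`; show every small sphere around `c` contains a point mapping to `c`
      have hsmall : ∀ ε : ℝ, 0 < ε → ε ≤ dist (q : C) c →
          ∃ x : K, dist (x : C) c = ε ∧ f x = c := by
        intro ε hε hεq
        set g : K → ℝ := fun x => dist (x : C) c with hg
        have hgc : Continuous g := continuous_subtype_val.dist continuous_const
        set A : Set K := {x | ε ≤ g x} with hA
        have hAcl : IsClosed A := isClosed_le continuous_const hgc
        have hqA : q ∈ A := hεq
        have hAne : A ≠ Set.univ := by
          intro hU
          have : (⟨c, hcK⟩ : K) ∈ A := hU ▸ Set.mem_univ _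
          have h0 : g (⟨c, hcK⟩ : K) = 0 := dist_self c
          rw [Set.mem_setOf_eq, h0] at this
          exact absurd this (not_le.mpr hε)
        obtain ⟨x0, hx0D, hx0fr⟩ := bump hAcl hAne hqA
        set D : Set K := connectedComponentIn A q with hD
        have hDq : q ∈ D := mem_connectedComponentIn hqA
        have hDsub : D ⊆ A := connectedComponentIn_subset A q
        have hDconn : IsConnected D := isConnected_connectedComponentIn_iff.mpr hqA
        have hDcl : IsClosed D := by
          have hclo : closure D ⊆ D := by
            apply IsPreconnected.subset_connectedComponentIn
              hDconn.isPreconnected.closure (subset_closure hDq)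
            exact hAcl.closure_subset_iff.mpr hDsub
          exact isClosed_of_closure_subset hclo
        have hx0 : g x0 = ε := by
          have : frontier A ⊆ {x : K | (fun _ => ε) x = g x} :=
            frontier_le_subset_eq continuous_const hgc
          exact (this hx0fr).symm
        -- the image of `D` in `C`
        set M : Set C := Subtype.val '' D with hM
        have hMK : M ⊆ K := by rintro _ ⟨x, _, rfl⟩; exact x.2
        have hMcpt : IsCompact M := (hDcl.isCompact).image continuous_subtype_val
        have hMconn : IsConnected M := hDconn.image _ continuous_subtype_val.continuousOn
        have hcM : c ∉ M := by
          rintro ⟨x, hxD, hxc⟩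
          have : ε ≤ g x := hDsub hxD
          rw [hg] at this
          simp only [hxc, dist_self] at this
          exact absurd this (not_le.mpr hε)
        set g' : M → C := f ∘ Set.inclusion hMK with hg'
        have hg'cont : Continuous g' := hf.comp (continuous_inclusion hMK)
        have hqM : (q : C) ∈ M := Set.mem_image_of_mem _ hDq
        have hincq : Set.inclusion hMK ⟨(q : C), hqM⟩ = q := Subtype.ext rfl
        by_cases hgc' : ∃ d, ∀ y, g' y = d
        · obtain ⟨d, hd⟩ := hgc'
          have hdc : d = c := by
            have := hd ⟨(q : C), hqM⟩
            rw [hg'] at this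
            simp only [Function.comp_apply, hincq] at this
            rw [← this, hc]
          have hx0M : (x0 : C) ∈ M := Set.mem_image_of_mem _ hx0D
          refine ⟨x0, hx0, ?_⟩
          have := hd ⟨(x0 : C), hx0M⟩
          rw [hg'] at this
          simp only [Function.comp_apply] at this
          have hinc : Set.inclusion hMK ⟨(x0 : C), hx0M⟩ = x0 := Subtype.ext rfl
          rw [hinc] at this
          rw [this, hdc]
        · exfalso
          push_neg at hgc'
          obtain ⟨y0, hy0⟩ := hgc' (g' ⟨(q : C), hqM⟩)
          have hMnt : M.Nontrivial := by
            refine ⟨(y0 : C), y0.2, (q : C), hqM, fun hh => hy0 ?_⟩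
            congr 1
            exact Subtype.ext hh
          have hrnt' : (Set.range g').Nontrivial :=
            ⟨g' y0, Set.mem_range_self _, g' ⟨(q : C), hqM⟩, Set.mem_range_self _, hy0⟩
          haveI : CompactSpace M := isCompact_iff_compactSpace.mp hMcpt
          haveI : ConnectedSpace M := Subtype.connectedSpace hMconn
          have hMeq : M = Set.range g' :=
            h M (Set.range g') hMcpt hMconn hMnt (isCompact_range hg'cont)
              (isConnected_range hg'cont) hrnt' g' hg'cont rfl
          have hcr : c ∈ Set.range g' := by
            refine ⟨⟨(q : C), hqM⟩, ?_⟩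
            rw [hg']
            simp only [Function.comp_apply, hincq]
            exact hc.symm
          exact hcM (hMeq ▸ hcr)
      -- pass to the limit: `c` is in the closure of the fiber over `c`
      have hd0 : 0 < dist (q : C) c := dist_pos.mpr hqc
      have hccl : (⟨c, hcK⟩ : K) ∈ closure {x : K | f x = c} := by
        rw [Metric.mem_closure_iff]
        intro ε hε
        obtain ⟨x, hx, hfx⟩ := hsmall (min (ε / 2) (dist (q : C) c))
          (lt_min (half_pos hε) hd0) (min_le_right _ _)
        refine ⟨x, hfx, ?_⟩
        rw [Subtype.dist_eq]
        simp only
        rw [dist_comm, hx]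
        exact lt_of_le_of_lt (min_le_left _ _) (half_lt_self hε)
      have hScl : IsClosed {x : K | f x = c} := isClosed_eq hf continuous_const
      exact hScl.closure_subset hccl
    -- conclude: every point of `K` is a value of `f`, hence a fixed point
    intro x
    have hx : (x : C) ∈ Set.range f := hrK.symm ▸ x.2
    obtain ⟨q, hq⟩ := hx
    have hcK : f q ∈ K := hrK ▸ Set.mem_range_self q
    have := key q hcK
    have hxq : (⟨f q, hcK⟩ : K) = x := Subtype.ext hq
    rw [hxq] at this
    rw [this, hq]
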